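/- Let P be a Π-irreducible, Π-invariant transition kernel that is geometrically ergodic, where Π is not a point mass. Then Π-ess sup_x P(x, {x}) < 1. -/

import Mathlib

open MeasureTheory ProbabilityTheory
open scoped ENNReal

/-- The `k`-step kernel `P^k`. -/
noncomputable def iterKernel {E : Type*} [MeasurableSpace E] (P : Kernel E E) : ℕ → Kernel E E
  | 0 => Kernel.id
  | n + 1 => P ∘ₖ iterKernel P n

instance iterKernel.isMarkov {E : Type*} [MeasurableSpace E] (P : Kernel E E) [IsMarkovKernel P]
    (n : ℕ) : IsMarkovKernel (iterKernel P n) := by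
  induction n with
  | zero => exact inferInstanceAs (IsMarkovKernel (Kernel.id))
  | succ n ih => exact inferInstanceAs (IsMarkovKernel (P ∘ₖ iterKernel P n))

lemma pow_le_iter {E : Type*} [MeasurableSpace E] [MeasurableSingletonClass E]
    (P : Kernel E E) [IsMarkovKernel P] (x : E) (n : ℕ) :
    (P x {x}) ^ n ≤ iterKernel P n x {x} := by
  induction n with
  | zero => simp [iterKernel, Kernel.id_apply]
  | succ n ih =>
      have h1 : iterKernel P (n+1) x {x} = ∫⁻ y, P y {x} ∂(iterKernel P n x) := by
        rw [iterKernel, Kernel.comp_apply' _ _ _ (measurableSet_singleton x)]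
      rw [h1]
      calc (P x {x}) ^ (n+1) = (P x {x}) * (P x {x}) ^ n := by ring
        _ ≤ (P x {x}) * iterKernel P n x {x} := by gcongr
        _ = ∫⁻ y in {x}, P y {x} ∂(iterKernel P n x) := by
            rw [lintegral_singleton]
        _ ≤ ∫⁻ y, P y {x} ∂(iterKernel P n x) := setLIntegral_le_lintegral _ _

lemma iter_compl_eq_zero {E : Type*} [MeasurableSpace E] [MeasurableSingletonClass E]
    (P : Kernel E E) [IsMarkovKernel P] (x : E) (hx : P x {x} = 1) (n : ℕ) :
    iterKernel P n x ({x}ᶜ) = 0 := by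
  induction n with
  | zero => simp [iterKernel, Kernel.id_apply]
  | succ n ih =>
      rw [iterKernel, Kernel.comp_apply' _ _ _ (measurableSet_singleton x).compl]
      have hPx : P x ({x}ᶜ) = 0 := by
        rw [measure_compl (measurableSet_singleton x) (measure_ne_top _ _), hx]
        simp
      rw [lintegral_eq_zero_iff (Kernel.measurable_coe P (measurableSet_singleton x).compl)]
      refine measure_mono_null ?_ ih
      intro y hy
      simp only [Set.mem_setOf_eq, Pi.zero_apply] at hy
      simp only [Set.mem_compl_iff, Set.mem_singleton_iff]
      intro h
      subst h
      exact hy hPx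

/-- From irreducibility and `Pr` not a point mass: no absorbing point. -/
lemma holding_lt_one {E : Type*} [MeasurableSpace E] [MeasurableSingletonClass E]
    (P : Kernel E E) [IsMarkovKernel P] (Pr : Measure E) [IsProbabilityMeasure Pr]
    (hirr : ∀ x : E, Pr ≪ Measure.sum (fun k : ℕ => iterKernel P (k + 1) x))
    (hnotpoint : ∀ x : E, Pr {x} < 1) (x : E) : P x {x} < 1 := by
  rcases lt_or_ge (P x {x}) 1 with h | h
  · exact h
  exfalso
  have hx : P x {x} = 1 := le_antisymm prob_le_one h
  have hsum : Measure.sum (fun k : ℕ => iterKernel P (k + 1) x) ({x}ᶜ) = 0 := by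
    rw [Measure.sum_apply _ (measurableSet_singleton x).compl]
    simp [iter_compl_eq_zero P x hx]
  have hPrc : Pr ({x}ᶜ) = 0 := hirr x hsum
  have h1 : Pr {x} = 1 := by
    have hc := measure_compl (μ := Pr) (measurableSet_singleton x) (measure_ne_top _ _)
    rw [hPrc, measure_univ] at hc
    exact le_antisymm prob_le_one (tsub_eq_zero_iff_le.mp hc.symm)
  exact absurd h1 (hnotpoint x).ne

lemma small_bound {E : Type*} [MeasurableSpace E] [MeasurableSingletonClass E]
    (P : Kernel E E) [IsMarkovKernel P] {C : Set E} {k : ℕ} {δ : ℝ} {ν : Measure E}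
    (hk : 1 ≤ k) (hδ : δ ∈ Set.Ioo (0:ℝ) 1) (hν : IsProbabilityMeasure ν)
    (hmin : ∀ x ∈ C, ∀ A : Set E, MeasurableSet A → ENNReal.ofReal δ * ν A ≤ iterKernel P k x A)
    {x : E} (hxC : x ∈ C) (hx2 : ν {x} ≤ 1/2) :
    P x {x} ≤ ENNReal.ofReal ((1 - δ/2) ^ ((k:ℝ)⁻¹)) := by
  set t := P x {x} with ht
  have ht1 : t ≤ 1 := prob_le_one
  have hνc : (1:ℝ≥0∞)/2 ≤ ν ({x}ᶜ) := by
    rw [measure_compl (measurableSet_singleton x) (measure_ne_top _ _), measure_univ]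
    calc (1:ℝ≥0∞)/2 = 1 - 1/2 := by
          rw [one_div, ENNReal.one_sub_inv_two]
      _ ≤ 1 - ν {x} := tsub_le_tsub_left hx2 1
  have hmx := hmin x hxC ({x}ᶜ) (measurableSet_singleton x).compl
  have hiter : iterKernel P k x ({x}ᶜ) = 1 - iterKernel P k x {x} := by
    rw [measure_compl (measurableSet_singleton x) (measure_ne_top _ _), measure_univ]
  have hchain : ENNReal.ofReal δ * (1/2) ≤ 1 - t ^ k := by
    calc ENNReal.ofReal δ * (1/2) ≤ ENNReal.ofReal δ * ν ({x}ᶜ) := by gcongr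
      _ ≤ iterKernel P k x ({x}ᶜ) := hmx
      _ = 1 - iterKernel P k x {x} := hiter
      _ ≤ 1 - t ^ k := tsub_le_tsub_left (pow_le_iter P x k) 1
  have hpowle : t ^ k ≤ 1 := pow_le_one₀ zero_le ht1
  have hadd : t ^ k + ENNReal.ofReal δ * (1/2) ≤ 1 := by
    calc t ^ k + ENNReal.ofReal δ * (1/2) ≤ t ^ k + (1 - t ^ k) := by gcongr
      _ = 1 := add_tsub_cancel_of_le hpowle
  have hfin : ENNReal.ofReal δ * (1/2) ≠ ∞ :=
    ENNReal.mul_ne_top ENNReal.ofReal_ne_top (by norm_num)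
  have hkey : t ^ k ≤ 1 - ENNReal.ofReal δ * (1/2) :=
    ENNReal.le_sub_of_add_le_right hfin hadd
  have hdle : ENNReal.ofReal δ * (1/2) ≤ 1 := hchain.trans tsub_le_self
  have hreal : t.toReal ^ k ≤ 1 - δ / 2 := by
    have h2 := ENNReal.toReal_mono (ne_top_of_le_ne_top ENNReal.one_ne_top tsub_le_self) hkey
    rw [ENNReal.toReal_pow, ENNReal.toReal_sub_of_le hdle ENNReal.one_ne_top] at h2
    have : (ENNReal.ofReal δ * (1/2)).toReal = δ / 2 := by
      rw [ENNReal.toReal_mul, ENNReal.toReal_ofReal hδ.1.le]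
      simp only [ENNReal.toReal_div, ENNReal.toReal_one]
      norm_num
      ring
    rw [this] at h2
    simpa using h2
  have hk0 : (0:ℝ) < (k:ℝ) := by exact_mod_cast hk.trans_lt' Nat.zero_lt_one
  have h3 : t.toReal = (t.toReal ^ k) ^ ((k:ℝ)⁻¹) := by
    rw [← Real.rpow_natCast t.toReal k, ← Real.rpow_mul ENNReal.toReal_nonneg,
      mul_inv_cancel₀ hk0.ne', Real.rpow_one]
  have h4 : t.toReal ≤ (1 - δ/2) ^ ((k:ℝ)⁻¹) := by
    rw [h3]
    exact Real.rpow_le_rpow (by positivity) hreal (by positivity)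
  calc t = ENNReal.ofReal t.toReal := (ENNReal.ofReal_toReal (by finiteness)).symm
    _ ≤ _ := ENNReal.ofReal_le_ofReal h4

/-- `C` is a small set for `P`. -/
def IsSmallSet {E : Type*} [MeasurableSpace E] (P : Kernel E E) (C : Set E) : Prop :=
  ∃ (k : ℕ) (δ : ℝ) (ν : Measure E), 1 ≤ k ∧ δ ∈ Set.Ioo (0:ℝ) 1 ∧ IsProbabilityMeasure ν ∧
    ∀ x ∈ C, ∀ A : Set E, MeasurableSet A → ENNReal.ofReal δ * ν A ≤ iterKernel P k x A

/-- Geometric ergodicity (geometric drift condition towards a small set of positive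
`Π`-measure). -/
def GeomErgodic {E : Type*} [MeasurableSpace E] (P : Kernel E E) (Pr : Measure E) : Prop :=
  ∃ (C : Set E) (V : E → ℝ≥0∞) (γ b : ℝ),
    MeasurableSet C ∧ IsSmallSet P C ∧ 0 < Pr C ∧
    γ ∈ Set.Ioo (0:ℝ) 1 ∧ 0 ≤ b ∧ Measurable V ∧ (∀ x, 1 ≤ V x) ∧ Pr {x | V x = ∞} = 0 ∧
    ∀ x, ∫⁻ y, V y ∂(P x) ≤ ENNReal.ofReal γ * V x + ENNReal.ofReal b * C.indicator 1 x

/-- If a `Π`-irreducible, `Π`-invariant, geometrically ergodic Markov kernel has invariant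
law `Π` which is not a point mass, then `Π`-ess sup of the holding probability
`P(x, {x})` is `< 1`. -/
theorem holding_prob_essSup_lt_one_of_geomErgodic
    {E : Type*} [MeasurableSpace E] [MeasurableSingletonClass E]
    (P : Kernel E E) [IsMarkovKernel P] (Pr : Measure E) [IsProbabilityMeasure Pr]
    (hinv : ∀ A : Set E, MeasurableSet A → ∫⁻ x, P x A ∂Pr = Pr A)
    (hirr : ∀ x : E, Pr ≪ Measure.sum (fun k : ℕ => iterKernel P (k + 1) x))
    (hnotpoint : ∀ x : E, Pr {x} < 1)
    (herg : GeomErgodic P Pr) :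
    ∃ c : ℝ, c < 1 ∧ ∀ᵐ x ∂Pr, P x {x} ≤ ENNReal.ofReal c := by
  obtain ⟨C, V, γ, b, hCmeas, hsmall, hCpos, hγ, hb, hVmeas, hV1, hVfin, hdrift⟩ := herg
  obtain ⟨k, δ, ν, hk, hδ, hν, hmin⟩ := hsmall
  set c2 : ℝ := (1 - δ/2) ^ ((k:ℝ)⁻¹) with hc2def
  have hk0 : (0:ℝ) < (k:ℝ) := by exact_mod_cast hk.trans_lt' Nat.zero_lt_one
  have hc2lt : c2 < 1 :=
    Real.rpow_lt_one (by linarith [hδ.2]) (by linarith [hδ.1]) (by positivity)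
  -- bound on the at most one exceptional point
  have hex : ∃ c3 : ℝ, c3 < 1 ∧ ∀ x : E, (1:ℝ≥0∞)/2 < ν {x} → P x {x} ≤ ENNReal.ofReal c3 := by
    by_cases h : ∃ x0 : E, (1:ℝ≥0∞)/2 < ν {x0}
    · obtain ⟨x0, hx0⟩ := h
      have hlt := holding_lt_one P Pr hirr hnotpoint x0
      refine ⟨(P x0 {x0}).toReal, ?_, ?_⟩
      · have := ENNReal.toReal_lt_toReal (by finiteness) ENNReal.one_ne_top |>.mpr hlt
        simpa using this
      · intro x hx
        have hxx0 : x = x0 := by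
          by_contra hne
          have hdisj : Disjoint ({x} : Set E) {x0} := by
            simp [Set.disjoint_singleton, hne]
          have hsum : ν {x} + ν {x0} = ν ({x} ∪ {x0}) :=
            (measure_union hdisj (measurableSet_singleton x0)).symm
          have h1 : (1:ℝ≥0∞) < ν {x} + ν {x0} := by
            calc (1:ℝ≥0∞) = 1/2 + 1/2 := by rw [ENNReal.add_halves]
              _ < ν {x} + ν {x0} :=
                ENNReal.add_lt_add hx hx0
          rw [hsum] at h1
          exact absurd (prob_le_one (μ := ν) (s := {x} ∪ {x0})) (not_le.mpr h1)
        subst hxx0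
        rw [ENNReal.ofReal_toReal (by finiteness)]
    · push_neg at h
      exact ⟨0, one_pos, fun x hx => absurd hx (not_lt.mpr (h x))⟩
  obtain ⟨c3, hc3lt, hc3⟩ := hex
  refine ⟨max (max γ c2) c3, max_lt (max_lt hγ.2 hc2lt) hc3lt, ?_⟩
  have hVae : ∀ᵐ x ∂Pr, V x ≠ ∞ := by
    rw [ae_iff]
    simpa [not_not] using hVfin
  filter_upwards [hVae] with x hVx
  by_cases hx2 : (1:ℝ≥0∞)/2 < ν {x}
  · exact (hc3 x hx2).trans (ENNReal.ofReal_le_ofReal (le_max_right _ _))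
  push_neg at hx2
  by_cases hxC : x ∈ C
  · exact (small_bound P hk hδ hν hmin hxC hx2).trans
      (ENNReal.ofReal_le_ofReal ((le_max_right γ c2).trans (le_max_left _ _)))
  · -- drift bound
    have hd := hdrift x
    rw [Set.indicator_of_notMem hxC, mul_zero, add_zero] at hd
    have hlow : V x * P x {x} ≤ ∫⁻ y, V y ∂(P x) := by
      rw [← lintegral_singleton]
      exact setLIntegral_le_lintegral _ _
    have hVne : V x ≠ 0 := (lt_of_lt_of_le zero_lt_one (hV1 x)).ne'
    have : V x * P x {x} ≤ V x * ENNReal.ofReal γ := by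
      calc V x * P x {x} ≤ ENNReal.ofReal γ * V x := hlow.trans hd
        _ = V x * ENNReal.ofReal γ := mul_comm _ _
    have hPγ : P x {x} ≤ ENNReal.ofReal γ := (ENNReal.mul_le_mul_iff_right hVne hVx).mp this
    exact hPγ.trans (ENNReal.ofReal_le_ofReal ((le_max_left γ c2).trans (le_max_left _ _)))
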